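/- For p > 1, and a finite measure σ on the unit sphere S^{d-1} of ℝ^d not concentrated on the intersection of S^{d-1} with any (d-1)-dimensional linear subspace, the function u ↦ (∫_{S^{d-1}} |⟨u,z⟩|^p σ(dz))^{1/p} is differentiable at every u ≠ 0. -/

import Mathlib

open MeasureTheory Real Set Topology
open scoped RealInnerProductSpace

private lemma my_abs_abs_rpow_mul_self (p : ℝ) (hp : 1 < p) (t : ℝ) :
    |(|t| ^ (p - 2) * t)| = |t| ^ (p - 1) := by
  rcases eq_or_ne t 0 with rfl | ht
  · simp [Real.zero_rpow (by intro h; linarith [sub_eq_zero.mp h] : p - 1 ≠ 0)]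
  · rw [abs_mul, abs_of_nonneg (Real.rpow_nonneg (abs_nonneg t) _),
      ← Real.rpow_add_one (abs_ne_zero.mpr ht)]
    ring_nf

private lemma my_cont_abs_rpow_mul_self (p : ℝ) (hp : 1 < p) :
    Continuous fun t : ℝ => |t| ^ (p - 2) * t := by
  rw [continuous_iff_continuousAt]
  intro t
  rcases eq_or_ne t 0 with rfl | ht
  · have key : Filter.Tendsto (fun t : ℝ => |t| ^ (p - 2) * t) (𝓝 0) (𝓝 0) := by
      rw [tendsto_zero_iff_norm_tendsto_zero]
      simp only [Real.norm_eq_abs, my_abs_abs_rpow_mul_self p hp]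
      have hc : ContinuousAt (fun t : ℝ => |t| ^ (p - 1)) 0 :=
        (Real.continuousAt_rpow_const _ (p - 1) (Or.inr (by linarith))).comp
          continuous_abs.continuousAt
      simpa [Real.zero_rpow (by intro h; linarith [sub_eq_zero.mp h] : p - 1 ≠ 0)]
        using hc.tendsto
    simpa [ContinuousAt] using key
  · exact (((Real.continuousAt_rpow_const _ (p - 2)
      (Or.inl (abs_ne_zero.mpr ht))).comp continuous_abs.continuousAt).mul
      continuousAt_id)

set_option synthInstance.maxHeartbeats 1000000 in
set_option maxHeartbeats 1000000 in
/-- For `p > 1` and a finite measure `σ` on the unit sphere of `ℝ^d` not concentrated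
on a great subsphere, the `p`-cosine transform norm
`u ↦ (∫ |⟨u,z⟩|^p dσ(z))^{1/p}` is differentiable at every `u ≠ 0`. -/
theorem lp_norm_differentiable {d : ℕ} (p : ℝ) (hp : 1 < p)
    (σ : Measure (Metric.sphere (0 : EuclideanSpace ℝ (Fin d)) 1)) [IsFiniteMeasure σ]
    (hfull : ∀ v : EuclideanSpace ℝ (Fin d), v ≠ 0 →
      0 < σ {z | ⟪v, (z : EuclideanSpace ℝ (Fin d))⟫ ≠ 0})
    (u : EuclideanSpace ℝ (Fin d)) (hu : u ≠ 0) :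
    DifferentiableAt ℝ (fun w : EuclideanSpace ℝ (Fin d) =>
      (∫ z, |⟪w, (z : EuclideanSpace ℝ (Fin d))⟫| ^ p ∂σ) ^ (1 / p)) u := by
  have hinner_le : ∀ (w : EuclideanSpace ℝ (Fin d))
      (z : Metric.sphere (0 : EuclideanSpace ℝ (Fin d)) 1),
      |⟪w, (z : EuclideanSpace ℝ (Fin d))⟫| ≤ ‖w‖ := by
    intro w z
    calc |⟪w, (z : EuclideanSpace ℝ (Fin d))⟫|
        ≤ ‖w‖ * ‖(z : EuclideanSpace ℝ (Fin d))‖ := abs_real_inner_le_norm _ _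
      _ = ‖w‖ := by rw [mem_sphere_zero_iff_norm.mp z.2, mul_one]
  have hcont : ∀ w : EuclideanSpace ℝ (Fin d),
      Continuous fun z : Metric.sphere (0 : EuclideanSpace ℝ (Fin d)) 1 =>
        ⟪w, (z : EuclideanSpace ℝ (Fin d))⟫ :=
    fun w => continuous_const.inner continuous_subtype_val
  have hmeas : ∀ w : EuclideanSpace ℝ (Fin d),
      AEStronglyMeasurable (fun z : Metric.sphere (0 : EuclideanSpace ℝ (Fin d)) 1 =>
        |⟪w, (z : EuclideanSpace ℝ (Fin d))⟫| ^ p) σ :=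
    fun w => ((hcont w).abs.rpow_const (fun z => Or.inr (by linarith))).aestronglyMeasurable
  have hint : ∀ w : EuclideanSpace ℝ (Fin d),
      Integrable (fun z : Metric.sphere (0 : EuclideanSpace ℝ (Fin d)) 1 =>
        |⟪w, (z : EuclideanSpace ℝ (Fin d))⟫| ^ p) σ := by
    intro w
    refine (integrable_const (‖w‖ ^ p)).mono' (hmeas w) ?_
    filter_upwards with z
    rw [Real.norm_eq_abs, abs_of_nonneg (Real.rpow_nonneg (abs_nonneg _) _)]
    exact Real.rpow_le_rpow (abs_nonneg _) (hinner_le w z) (by linarith)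
  set F' : EuclideanSpace ℝ (Fin d) → Metric.sphere (0 : EuclideanSpace ℝ (Fin d)) 1 →
      (EuclideanSpace ℝ (Fin d) →L[ℝ] ℝ) := fun w z =>
    (p * |⟪w, (z : EuclideanSpace ℝ (Fin d))⟫| ^ (p - 2) *
      ⟪w, (z : EuclideanSpace ℝ (Fin d))⟫) • (innerSL ℝ (z : EuclideanSpace ℝ (Fin d)))
    with hF'
  have hderiv : ∀ (w : EuclideanSpace ℝ (Fin d))
      (z : Metric.sphere (0 : EuclideanSpace ℝ (Fin d)) 1),
      HasFDerivAt (fun w : EuclideanSpace ℝ (Fin d) =>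
        |⟪w, (z : EuclideanSpace ℝ (Fin d))⟫| ^ p) (F' w z) w := by
    intro w z
    have hI : HasFDerivAt (fun w : EuclideanSpace ℝ (Fin d) =>
        ⟪w, (z : EuclideanSpace ℝ (Fin d))⟫)
        (innerSL ℝ (z : EuclideanSpace ℝ (Fin d))) w := by
      have h := (innerSL ℝ (z : EuclideanSpace ℝ (Fin d))).hasFDerivAt (x := w)
      convert h using 2 with v
      exact real_inner_comm _ _
    exact (hasDerivAt_abs_rpow ⟪w, (z : EuclideanSpace ℝ (Fin d))⟫ hp).comp_hasFDerivAt w hI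
  have hF : HasFDerivAt (fun w : EuclideanSpace ℝ (Fin d) =>
      ∫ z, |⟪w, (z : EuclideanSpace ℝ (Fin d))⟫| ^ p ∂σ)
      (∫ z, F' u z ∂σ) u := by
    apply hasFDerivAt_integral_of_dominated_of_fderiv_le (s := Metric.ball u 1)
      (bound := fun _ => p * (‖u‖ + 1) ^ (p - 1)) (Metric.ball_mem_nhds u one_pos)
    · filter_upwards with w using hmeas w
    · exact hint u
    · show AEStronglyMeasurable ((fun z : Metric.sphere (0 : EuclideanSpace ℝ (Fin d)) 1 =>
          p * |⟪u, (z : EuclideanSpace ℝ (Fin d))⟫| ^ (p - 2) * ⟪u, (z : EuclideanSpace ℝ (Fin d))⟫) •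
          (fun z : Metric.sphere (0 : EuclideanSpace ℝ (Fin d)) 1 =>
            innerSL ℝ (z : EuclideanSpace ℝ (Fin d)))) σ
      apply AEStronglyMeasurable.smul
      · have : Continuous fun z : Metric.sphere (0 : EuclideanSpace ℝ (Fin d)) 1 =>
            p * (|⟪u, (z : EuclideanSpace ℝ (Fin d))⟫| ^ (p - 2) *
              ⟪u, (z : EuclideanSpace ℝ (Fin d))⟫) :=
          continuous_const.mul ((my_cont_abs_rpow_mul_self p hp).comp (hcont u))
        simpa [mul_assoc] using this.aestronglyMeasurable
      · exact ((innerSL ℝ (E := EuclideanSpace ℝ (Fin d))).continuous.comp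
          continuous_subtype_val).aestronglyMeasurable
    · filter_upwards with z
      intro w hw
      have hnz : ‖(z : EuclideanSpace ℝ (Fin d))‖ = 1 := mem_sphere_zero_iff_norm.mp z.2
      have hwle : ‖w‖ ≤ ‖u‖ + 1 := by
        have h1 := mem_ball_iff_norm.mp hw
        have h2 : ‖w‖ - ‖u‖ ≤ ‖w - u‖ := norm_sub_norm_le w u
        linarith
      refine le_trans (norm_smul_le (β := EuclideanSpace ℝ (Fin d) →L[ℝ] ℝ) _ _) ?_
      rw [Real.norm_eq_abs, innerSL_apply_norm, hnz, mul_one, mul_assoc, abs_mul, abs_of_pos (by linarith : (0:ℝ) < p),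
        my_abs_abs_rpow_mul_self p hp]
      have h2 : |⟪w, (z : EuclideanSpace ℝ (Fin d))⟫| ^ (p - 1) ≤ (‖u‖ + 1) ^ (p - 1) :=
        Real.rpow_le_rpow (abs_nonneg _) ((hinner_le w z).trans hwle) (by linarith)
      exact mul_le_mul_of_nonneg_left h2 (by linarith)
    · exact integrable_const _
    · filter_upwards with z
      intro w _
      exact hderiv w z
  have hpos : 0 < ∫ z, |⟪u, (z : EuclideanSpace ℝ (Fin d))⟫| ^ p ∂σ := by
    rw [integral_pos_iff_support_of_nonneg
      (fun z => Real.rpow_nonneg (abs_nonneg _) _) (hint u)]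
    have hsupp : Function.support
        (fun z : Metric.sphere (0 : EuclideanSpace ℝ (Fin d)) 1 =>
          |⟪u, (z : EuclideanSpace ℝ (Fin d))⟫| ^ p)
        = {z : Metric.sphere (0 : EuclideanSpace ℝ (Fin d)) 1 |
            ⟪u, (z : EuclideanSpace ℝ (Fin d))⟫ ≠ 0} := by
      ext z
      simp only [Function.mem_support, mem_setOf_eq]
      rw [ne_eq, Real.rpow_eq_zero (abs_nonneg _) (by positivity : p ≠ 0), abs_eq_zero]
    rw [hsupp]
    exact hfull u hu
  exact (hF.differentiableAt).rpow_const (Or.inl hpos.ne')
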